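/- The function f(x) = ((K+1)e^{-K}/λ) · e^{-(K+1)x/λ} · I₀(2√(K(K+1)x/λ)) on [0,∞) is a valid probability density: it is nonnegative and ∫₀^∞ f(x) dx = 1. -/

import Mathlib

open Real MeasureTheory

/-- The zero-th order modified Bessel function of the first kind. -/
noncomputable def besselI0 (z : ℝ) : ℝ :=
  ∑' l : ℕ, (z / 2) ^ (2 * l) / ((Nat.factorial l : ℝ)) ^ 2

/-- The Rician channel-gain density. -/
noncomputable def ricianPDF (K lam x : ℝ) : ℝ :=
  ((K + 1) * Real.exp (-K) / lam) * Real.exp (-(K + 1) * x / lam) *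
    besselI0 (2 * Real.sqrt (K * (K + 1) * x / lam))

lemma besselI0_nonneg (z : ℝ) : 0 ≤ besselI0 z := by
  refine tsum_nonneg fun l => ?_
  rw [pow_mul]
  positivity

lemma besselI0_sqrt_eq {K u : ℝ} (hK : 0 ≤ K) (hu : 0 ≤ u) :
    besselI0 (2 * Real.sqrt (K * u)) = ∑' l : ℕ, (K * u) ^ l / ((Nat.factorial l : ℝ)) ^ 2 := by
  unfold besselI0
  congr 1
  funext l
  rw [show (2:ℝ) * Real.sqrt (K * u) / 2 = Real.sqrt (K * u) from by ring, pow_mul,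
    Real.sq_sqrt (by positivity)]

lemma pow_mul_exp_integrableOn (l : ℕ) :
    IntegrableOn (fun u : ℝ => u ^ l * Real.exp (-u)) (Set.Ioi 0) := by
  have h := integrableOn_rpow_mul_exp_neg_mul_rpow (p := 1) (s := (l : ℝ))
    (b := 1) (lt_of_lt_of_le neg_one_lt_zero (Nat.cast_nonneg l)) one_pos one_pos
  simp_rw [Real.rpow_one, Real.rpow_natCast, neg_one_mul] at h
  exact h

lemma pow_mul_exp_integral (l : ℕ) :
    ∫ u in Set.Ioi (0 : ℝ), u ^ l * Real.exp (-u) = (Nat.factorial l : ℝ) := by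
  have h := integral_rpow_mul_exp_neg_mul_Ioi (a := (l : ℝ) + 1) (r := 1)
    (by positivity) one_pos
  simp only [add_sub_cancel_right, Real.rpow_natCast, one_mul, one_div, inv_one,
    Real.one_rpow] at h
  rw [h]
  rw [show ((l : ℝ) + 1) = ((l : ℕ) + 1 : ℝ) by norm_num]
  rw [Real.Gamma_nat_eq_factorial]

lemma key_integral {K : ℝ} (hK : 0 ≤ K) :
    ∫ u in Set.Ioi (0 : ℝ), Real.exp (-u) * besselI0 (2 * Real.sqrt (K * u))
      = Real.exp K := by
  set F : ℕ → ℝ → ℝ := fun l u => (K ^ l / ((Nat.factorial l : ℝ)) ^ 2)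
    * (u ^ l * Real.exp (-u)) with hF
  have hstep : ∫ u in Set.Ioi (0 : ℝ), Real.exp (-u) * besselI0 (2 * Real.sqrt (K * u))
      = ∫ u in Set.Ioi (0 : ℝ), ∑' l : ℕ, F l u := by
    refine setIntegral_congr_fun measurableSet_Ioi fun u hu => ?_
    rw [besselI0_sqrt_eq hK (le_of_lt hu), ← tsum_mul_left]
    congr 1
    funext l
    simp only [hF, mul_pow]
    ring
  have hFint : ∀ l, Integrable (F l) (volume.restrict (Set.Ioi (0:ℝ))) := fun l =>
    (pow_mul_exp_integrableOn l).const_mul _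
  have hFnorm : ∀ l, ∫ u in Set.Ioi (0 : ℝ), ‖F l u‖ = K ^ l / (Nat.factorial l : ℝ) := by
    intro l
    have h1 : ∀ u ∈ Set.Ioi (0:ℝ), ‖F l u‖ = F l u := by
      intro u hu
      rw [Real.norm_eq_abs, abs_of_nonneg]
      have : (0:ℝ) < u := hu
      positivity
    rw [setIntegral_congr_fun measurableSet_Ioi h1]
    simp only [hF]
    rw [integral_const_mul, pow_mul_exp_integral]
    have hl : (Nat.factorial l : ℝ) ≠ 0 := Nat.cast_ne_zero.mpr (Nat.factorial_ne_zero l)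
    field_simp
  have hsum : Summable fun l => ∫ u in Set.Ioi (0 : ℝ), ‖F l u‖ := by
    simp_rw [hFnorm]
    exact Real.summable_pow_div_factorial K
  rw [hstep, ← integral_tsum_of_summable_integral_norm hFint hsum]
  have : ∀ l : ℕ, ∫ u in Set.Ioi (0 : ℝ), F l u = K ^ l / (Nat.factorial l : ℝ) := by
    intro l
    simp only [hF]
    rw [integral_const_mul, pow_mul_exp_integral]
    have hl : (Nat.factorial l : ℝ) ≠ 0 := Nat.cast_ne_zero.mpr (Nat.factorial_ne_zero l)
    field_simp
  simp_rw [this]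
  rw [Real.exp_eq_exp_ℝ, NormedSpace.exp_eq_tsum_div]

/-- The Rician density is nonnegative on `[0,∞)` and integrates to `1`. -/
theorem stmt1 (K lam : ℝ) (hK : 0 ≤ K) (hlam : 0 < lam) :
    (∀ x : ℝ, 0 ≤ x → 0 ≤ ricianPDF K lam x) ∧
      ∫ x in Set.Ioi (0 : ℝ), ricianPDF K lam x = 1 := by
  constructor
  · intro x hx
    unfold ricianPDF
    have h1 := besselI0_nonneg (2 * Real.sqrt (K * (K + 1) * x / lam))
    positivity
  · set b : ℝ := (K + 1) / lam with hb
    have hbpos : 0 < b := by positivity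
    set g : ℝ → ℝ := fun u => Real.exp (-u) * besselI0 (2 * Real.sqrt (K * u)) with hg
    have h1 : ∫ x in Set.Ioi (0 : ℝ), ricianPDF K lam x
        = ∫ x in Set.Ioi (0 : ℝ), ((K + 1) * Real.exp (-K) / lam) * g (b * x) := by
      refine setIntegral_congr_fun measurableSet_Ioi fun x _ => ?_
      unfold ricianPDF
      simp only [hg]
      rw [show -(K + 1) * x / lam = -(b * x) by rw [hb]; ring,
        show K * (K + 1) * x / lam = K * (b * x) by rw [hb]; ring]
      ring
    rw [h1, integral_const_mul, integral_comp_mul_left_Ioi g 0 hbpos, mul_zero,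
      smul_eq_mul, key_integral hK]
    rw [hb]
    field_simp
    rw [← Real.exp_add]
    simp
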